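/- For a (K,L,M,N) multi-antenna coded caching system with t = KM/N an integer, K = nt + (n-1)L for an integer n ≥ 2, and L ≥ t, a delivery time T = (K-t)/(t+L) = n-1 is achievable with subpacketization number K/gcd(K,t,L). -/

import Mathlib

open scoped Classical

/-- A `(K,L,F,Z,S)` extended placement delivery array (EPDA): an `F × K` array
with entries `none` (the star `★`) or `some s` with `s ∈ [S]`, satisfying
conditions C1–C4. -/
def IsEPDA (L Z : ℕ) {K F S : ℕ} (A : Fin F → Fin K → Option (Fin S)) : Prop :=
  -- C1: the star appears exactly `Z` times in each column
  (∀ k : Fin K, (Finset.univ.filter (fun j => A j k = none)).card = Z) ∧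
  -- C2: every integer in `[S]` occurs at least once
  (∀ s : Fin S, ∃ j k, A j k = some s) ∧
  -- C3: no integer appears more than once in any column
  (∀ (k : Fin K) (j₁ j₂ : Fin F) (s : Fin S),
    A j₁ k = some s → A j₂ k = some s → j₁ = j₂) ∧
  -- C4: in the subarray `A^(s)` (rows and columns containing `s`),
  -- no row contains more than `L` integer entries
  (∀ (s : Fin S) (j : Fin F), (∃ k, A j k = some s) →
    (Finset.univ.filter
      (fun k : Fin K => (∃ j', A j' k = some s) ∧ A j k ≠ none)).card ≤ L)

/-- A `g`-regular EPDA: each integer in `[S]` appears exactly `g` times. -/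
def IsRegularEPDA (g : ℕ) {K F S : ℕ} (A : Fin F → Fin K → Option (Fin S)) : Prop :=
  ∀ s : Fin S, (Finset.univ.filter (fun p : Fin F × Fin K => A p.1 p.2 = some s)).card = g

namespace Stmt14Aux

lemma mod_two_cases (K a : ℕ) (hK : 0 < K) (h : a < 2*K) :
    (a % K = a ∧ a < K) ∨ (a % K = a - K ∧ K ≤ a) := by
  rcases Nat.lt_or_ge a K with h' | h'
  · exact Or.inl ⟨Nat.mod_eq_of_lt h', h'⟩
  · refine Or.inr ⟨?_, h'⟩
    rw [Nat.mod_eq_sub_mod h', Nat.mod_eq_of_lt (by omega)]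

lemma enc_lt {m KK q u : ℕ} (hq : q < m) (hu : u < KK) : q * KK + u < m * KK := by
  have h1 : (q+1) * KK ≤ m * KK := Nat.mul_le_mul (by omega) le_rfl
  have h2 : (q+1) * KK = q * KK + KK := by ring
  omega

lemma enc_inj {KK q u q' u' : ℕ} (hu : u < KK) (hu' : u' < KK)
    (h : q * KK + u = q' * KK + u') : q = q' ∧ u = u' := by
  have hK0 : 0 < KK := by omega
  have h1 : (q * KK + u) % KK = u % KK := by
    rw [Nat.add_comm, Nat.add_mul_mod_self_right]
  have h2 : (q' * KK + u') % KK = u' % KK := by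
    rw [Nat.add_comm, Nat.add_mul_mod_self_right]
  rw [Nat.mod_eq_of_lt hu] at h1
  rw [Nat.mod_eq_of_lt hu'] at h2
  have huu : u = u' := by rw [← h1, ← h2, h]
  subst huu
  have h3 : q * KK = q' * KK := by omega
  exact ⟨Nat.eq_of_mul_eq_mul_right hK0 h3, rfl⟩

lemma card_fin_filter (N : ℕ) (p : ℕ → Prop) [DecidablePred p] :
    (Finset.univ.filter (fun x : Fin N => p x.val)).card = ((Finset.range N).filter p).card := by
  apply Finset.card_bij (fun a _ => a.val)
  · intro a ha
    simp only [Finset.mem_filter, Finset.mem_univ, true_and] at ha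
    simp [Finset.mem_filter, Finset.mem_range, a.isLt, ha]
  · intro a _ b _ h; exact Fin.ext h
  · intro b hb
    simp only [Finset.mem_filter, Finset.mem_range] at hb
    exact ⟨⟨b, hb.1⟩, by simp [Finset.mem_filter, hb.2], rfl⟩

lemma card_shift (KK e Z : ℕ) (hKK0 : 0 < KK) (he : e < KK) (hZK : Z ≤ KK) :
    ((Finset.range KK).filter (fun a => (e + KK - a) % KK < Z)).card = Z := by
  have key : ∀ x, x < KK → (e + KK - (e + KK - x) % KK) % KK = x := by
    intro x hx
    rcases mod_two_cases KK (e + KK - x) hKK0 (by omega) with ⟨h1, h2⟩ | ⟨h1, h2⟩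
    · rw [h1]
      have h3 : e + KK - (e + KK - x) = x := by omega
      rw [h3, Nat.mod_eq_of_lt hx]
    · rw [h1]
      have h3 : e + KK - (e + KK - x - KK) = KK + x := by omega
      rw [h3, Nat.add_mod_left, Nat.mod_eq_of_lt hx]
  have main : ((Finset.range KK).filter (fun a => (e + KK - a) % KK < Z)).card
      = (Finset.range Z).card := by
    apply Finset.card_bij' (fun a _ => (e + KK - a) % KK) (fun b _ => (e + KK - b) % KK)
    · intro a ha
      simp only [Finset.mem_filter, Finset.mem_range] at ha
      simp [Finset.mem_range, ha.2]
    · intro b hb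
      simp only [Finset.mem_range] at hb
      have hbK : b < KK := by omega
      simp only [Finset.mem_filter, Finset.mem_range]
      exact ⟨Nat.mod_lt _ hKK0, by rw [key b hbK]; omega⟩
    · intro a ha
      simp only [Finset.mem_filter, Finset.mem_range] at ha
      exact key a ha.1
    · intro b hb
      simp only [Finset.mem_range] at hb
      exact key b (by omega)
  rw [main, Finset.card_range]

def qf (m Z E KK v : ℕ) : ℕ :=
  if v < (m+1)*Z then v / Z - 1
  else if v < (m+1)*Z + m*E then (v - (m+1)*Z) / E
  else (KK - 1 - v) / Z

def uf (m Z E KK j v : ℕ) : ℕ :=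
  if v < (m+1)*Z + m*E then j else (j + KK - (qf m Z E KK v + 1)*Z) % KK

noncomputable def Bfun (m Z E g KK : ℕ) (j : Fin KK) (k : Fin (g*KK)) :
    Option (Fin (m*KK)) :=
  if hP : 0 < m*KK then
    (if ((k:ℕ) % KK + KK - (j:ℕ)) % KK < Z then none
     else some ⟨(qf m Z E KK (((k:ℕ) % KK + KK - (j:ℕ)) % KK) * KK
         + uf m Z E KK (j:ℕ) (((k:ℕ) % KK + KK - (j:ℕ)) % KK)) % (m*KK),
         Nat.mod_lt _ hP⟩)
  else none

lemma decode (m Z E KK : ℕ) (hm : 1 ≤ m) (hZ : 0 < Z)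
    (hKK : KK = (m+1)*Z + m*(Z+E)) (j e : ℕ) (hj : j < KK) (he : e < KK)
    (hv : Z ≤ (e + KK - j) % KK) :
    ∃ q u, qf m Z E KK ((e + KK - j) % KK) = q ∧
      uf m Z E KK j ((e + KK - j) % KK) = u ∧ q < m ∧ u < KK ∧
      ((j = u ∧ ((q+1)*Z ≤ (e + KK - u) % KK ∧ (e + KK - u) % KK < (q+1)*Z + Z ∨
          (m+1)*Z + q*E ≤ (e + KK - u) % KK ∧ (e + KK - u) % KK < (m+1)*Z + q*E + E)) ∨
        ((u + (q+1)*Z) % KK = j ∧ (e + KK - u) % KK < Z)) := by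
  have hexp2 : (m+1)*Z = m*Z + Z := by ring
  have hexp : m*(Z+E) = m*Z + m*E := by ring
  have hKK0 : 0 < KK := by omega
  set v := (e + KK - j) % KK with hvdef
  have hvKK : v < KK := Nat.mod_lt _ hKK0
  by_cases h1 : v < (m+1)*Z
  · -- region 1
    have hdm := Nat.div_add_mod v Z
    have hrZ : v % Z < Z := Nat.mod_lt _ hZ
    have hd1 : 1 ≤ v / Z := (Nat.one_le_div_iff hZ).mpr hv
    have hdlt : v / Z < m + 1 := (Nat.div_lt_iff_lt_mul hZ).mpr h1
    have hcond : v < (m+1)*Z + m*E := by omega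
    refine ⟨v / Z - 1, j, by simp [qf, h1], by simp [uf, hcond], by omega, hj, ?_⟩
    left
    refine ⟨rfl, Or.inl ⟨?_, ?_⟩⟩ <;>
    · rw [← hvdef]
      have hq1 : (v / Z - 1 + 1) = v / Z := by omega
      rw [hq1]
      have hcomm : (v/Z)*Z = Z*(v/Z) := by ring
      omega
  · by_cases h2 : v < (m+1)*Z + m*E
    · -- region 2
      have hE0 : 0 < E := by
        rcases Nat.eq_zero_or_pos E with hE | hE
        · subst hE; simp at h2; omega
        · exact hE
      set y := v - (m+1)*Z with hy
      have hdm := Nat.div_add_mod y E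
      have hrE : y % E < E := Nat.mod_lt _ hE0
      have hqm : y / E < m := (Nat.div_lt_iff_lt_mul hE0).mpr (by omega)
      refine ⟨y / E, j, by simp [qf, h1, h2, ← hy], by simp [uf, h2], hqm, hj, ?_⟩
      left
      refine ⟨rfl, Or.inr ⟨?_, ?_⟩⟩ <;>
      · rw [← hvdef]
        have hcomm : (y/E)*E = E*(y/E) := by ring
        omega
    · -- region 3
      set y := KK - 1 - v with hy
      have hmZ1 : 1 ≤ m*Z := Nat.mul_le_mul hm hZ
      have hdm := Nat.div_add_mod y Z
      have hrZ : y % Z < Z := Nat.mod_lt _ hZ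
      have hylt : y < m*Z := by omega
      have hqm : y / Z < m := (Nat.div_lt_iff_lt_mul hZ).mpr hylt
      have hq : qf m Z E KK v = y / Z := by simp [qf, h1, h2, ← hy]
      set D := (y/Z + 1)*Z with hD
      have hDid : D = Z*(y/Z) + Z := by rw [hD]; ring
      have hDle : D ≤ m*Z := by
        rw [hD]
        exact Nat.mul_le_mul (show y/Z + 1 ≤ m by omega) (le_refl Z)
      have hDK : D < KK := by omega
      have hu : uf m Z E KK j v = (j + KK - D) % KK := by
        simp [uf, h2, hq, ← hD]
      have hua := mod_two_cases KK (j + KK - D) hKK0 (by omega)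
      set u := (j + KK - D) % KK with huu
      have huK : u < KK := Nat.mod_lt _ hKK0
      refine ⟨y / Z, u, hq, hu, hqm, huK, ?_⟩
      right
      rw [← hD]
      constructor
      · rcases mod_two_cases KK (u + D) hKK0 (by omega) with ⟨e1, e2⟩ | ⟨e1, e2⟩ <;>
          rw [e1] <;> omega
      · have hvv := mod_two_cases KK (e + KK - j) hKK0 (by omega)
        rw [← hvdef] at hvv
        rcases mod_two_cases KK (e + KK - u) hKK0 (by omega) with ⟨e1, e2⟩ | ⟨e1, e2⟩ <;>
          rw [e1] <;> omega

lemma countBound (KK g Z' E' u a1 a2 : ℕ) (hKK0 : 0 < KK) (hu : u < KK) :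
    (Finset.univ.filter (fun k : Fin (g*KK) =>
      (a1 ≤ ((k:ℕ)%KK + KK - u)%KK ∧ ((k:ℕ)%KK + KK - u)%KK < a1 + Z') ∨
      (a2 ≤ ((k:ℕ)%KK + KK - u)%KK ∧ ((k:ℕ)%KK + KK - u)%KK < a2 + E'))).card
      ≤ g * (Z' + E') := by
  have h1 : (Finset.univ.filter (fun k : Fin (g*KK) =>
      (a1 ≤ ((k:ℕ)%KK + KK - u)%KK ∧ ((k:ℕ)%KK + KK - u)%KK < a1 + Z') ∨
      (a2 ≤ ((k:ℕ)%KK + KK - u)%KK ∧ ((k:ℕ)%KK + KK - u)%KK < a2 + E'))).card ≤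
      ((Finset.range g) ×ˢ (Finset.Ico a1 (a1+Z') ∪ Finset.Ico a2 (a2+E'))).card := by
    apply Finset.card_le_card_of_injOn
      (fun k : Fin (g*KK) => ((k:ℕ)/KK, ((k:ℕ)%KK + KK - u)%KK))
    · intro k hk
      simp only [Finset.mem_coe, Finset.mem_filter, Finset.mem_univ, true_and] at hk
      simp only [Finset.mem_coe, Finset.mem_product, Finset.mem_range, Finset.mem_union, Finset.mem_Ico]
      exact ⟨(Nat.div_lt_iff_lt_mul hKK0).mpr k.isLt, hk⟩
    · intro k1 _ k2 _ heq
      simp only [Prod.mk.injEq] at heq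
      obtain ⟨hq, hw⟩ := heq
      have hm1 : (k1:ℕ) % KK < KK := Nat.mod_lt _ hKK0
      have hm2 : (k2:ℕ) % KK < KK := Nat.mod_lt _ hKK0
      have he : (k1:ℕ) % KK = (k2:ℕ) % KK := by
        rcases mod_two_cases KK ((k1:ℕ)%KK + KK - u) hKK0 (by omega) with ⟨f1, f2⟩ | ⟨f1, f2⟩ <;>
        rcases mod_two_cases KK ((k2:ℕ)%KK + KK - u) hKK0 (by omega) with ⟨g1, g2⟩ | ⟨g1, g2⟩ <;>
          (rw [f1, g1] at hw; omega)
      have d1 := Nat.div_add_mod (k1:ℕ) KK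
      rw [hq] at d1
      have d2 := Nat.div_add_mod (k2:ℕ) KK
      apply Fin.ext
      omega
  have h2 : ((Finset.range g) ×ˢ (Finset.Ico a1 (a1+Z') ∪ Finset.Ico a2 (a2+E'))).card
      ≤ g * (Z' + E') := by
    rw [Finset.card_product, Finset.card_range]
    apply Nat.mul_le_mul le_rfl
    apply le_trans (Finset.card_union_le _ _)
    simp [Nat.card_Ico]
  omega

theorem baseEPDA (m Z LL g KK : ℕ) (hm : 1 ≤ m) (hZ : 0 < Z) (hZL : Z ≤ LL)
    (hg : 0 < g) (hKK : KK = (m+1)*Z + m*LL) :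
    ∃ B : Fin KK → Fin (g*KK) → Option (Fin (m*KK)), IsEPDA (g*LL) Z B := by
  obtain ⟨E, rfl⟩ : ∃ E, LL = Z + E := ⟨LL - Z, by omega⟩
  have hexp2 : (m+1)*Z = m*Z + Z := by ring
  have hexp : m*(Z+E) = m*Z + m*E := by ring
  have hKK0 : 0 < KK := by omega
  have hP : 0 < m*KK := by
    have := Nat.mul_le_mul hm hKK0
    omega
  have hBnone : ∀ (j : Fin KK) (k : Fin (g*KK)),
      Bfun m Z E g KK j k = none ↔ ((k:ℕ) % KK + KK - (j:ℕ)) % KK < Z := by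
    intro j k
    by_cases hc : ((k:ℕ) % KK + KK - (j:ℕ)) % KK < Z
    · simp only [Bfun, dif_pos hP, if_pos hc]
      simp [hc]
    · simp only [Bfun, dif_pos hP, if_neg hc]
      simp [hc]
  have hBsome : ∀ (j : Fin KK) (k : Fin (g*KK)) (s : Fin (m*KK)),
      Bfun m Z E g KK j k = some s ↔
        (Z ≤ ((k:ℕ) % KK + KK - (j:ℕ)) % KK ∧
         (qf m Z E KK (((k:ℕ) % KK + KK - (j:ℕ)) % KK) * KK
           + uf m Z E KK (j:ℕ) (((k:ℕ) % KK + KK - (j:ℕ)) % KK)) % (m*KK) = (s:ℕ)) := by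
    intro j k s
    by_cases hc : ((k:ℕ) % KK + KK - (j:ℕ)) % KK < Z
    · simp only [Bfun, dif_pos hP, if_pos hc]
      constructor
      · intro h; exact absurd h (by simp)
      · intro h; omega
    · simp only [Bfun, dif_pos hP, if_neg hc, Option.some.injEq, Fin.ext_iff]
      constructor
      · intro h; exact ⟨by omega, h⟩
      · intro h; exact h.2
  refine ⟨Bfun m Z E g KK, ?_, ?_, ?_, ?_⟩
  · -- C1
    intro k
    have he : (k:ℕ) % KK < KK := Nat.mod_lt _ hKK0
    have hfc : Finset.univ.filter (fun j : Fin KK => Bfun m Z E g KK j k = none)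
        = Finset.univ.filter (fun j : Fin KK => ((k:ℕ) % KK + KK - (j:ℕ)) % KK < Z) :=
      Finset.filter_congr (fun j _ => by rw [hBnone])
    rw [hfc]
    exact (card_fin_filter KK (fun a => ((k:ℕ) % KK + KK - a) % KK < Z)).trans
      (card_shift KK _ Z hKK0 he (by omega))
  · -- C2
    intro s
    have hu : (s:ℕ) % KK < KK := Nat.mod_lt _ hKK0
    have hsq := Nat.div_add_mod (s:ℕ) KK
    have hqm : (s:ℕ)/KK < m := (Nat.div_lt_iff_lt_mul hKK0).mpr s.isLt
    set q := (s:ℕ)/KK with hqdef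
    set u := (s:ℕ)%KK with hudef
    set D := (q+1)*Z with hD
    clear_value D
    clear_value q
    clear_value u
    have hDmZ : D ≤ m*Z := by
      rw [hD]; exact Nat.mul_le_mul (show q+1 ≤ m by omega) (le_refl Z)
    have hDZ : Z ≤ D := by
      rw [hD]
      have h1 : 1*Z ≤ (q+1)*Z := Nat.mul_le_mul (show 1 ≤ q+1 by omega) (le_refl Z)
      omega
    have hDK : D < KK := by omega
    have hkv : KK ≤ g*KK := by
      have := Nat.mul_le_mul hg (le_refl KK)
      omega
    refine ⟨⟨u, hu⟩, ⟨(u + D) % KK, lt_of_lt_of_le (Nat.mod_lt _ hKK0) hkv⟩, ?_⟩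
    rw [hBsome]
    have he : ((u + D) % KK) % KK = (u + D) % KK := Nat.mod_eq_of_lt (Nat.mod_lt _ hKK0)
    have hvD : ((u + D) % KK + KK - u) % KK = D := by
      rcases mod_two_cases KK (u + D) hKK0 (by omega) with ⟨e1, e2⟩ | ⟨e1, e2⟩
      · rw [e1]
        have h3 : u + D + KK - u = D + KK := by omega
        rw [h3, Nat.add_mod_right, Nat.mod_eq_of_lt hDK]
      · rw [e1]
        have h3 : u + D - KK + KK - u = D := by omega
        rw [h3, Nat.mod_eq_of_lt hDK]
    simp only [he, hvD]
    refine ⟨hDZ, ?_⟩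
    have hqfD : qf m Z E KK D = q := by
      have hc1 : D < (m+1)*Z := by omega
      have hDdiv : D / Z = q + 1 := by rw [hD]; exact Nat.mul_div_cancel (q+1) hZ
      simp [qf, hc1, hDdiv]
    have hufD : uf m Z E KK u D = u := by
      have hc : D < (m+1)*Z + m*E := by omega
      simp [uf, hc]
    rw [hqfD, hufD, Nat.mod_eq_of_lt (enc_lt hqm hu)]
    have hcomm : q*KK = KK*q := by ring
    rw [hcomm]
    exact hsq
  · -- C3
    intro k j₁ j₂ s hs1 hs2
    have he : (k:ℕ) % KK < KK := Nat.mod_lt _ hKK0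
    rw [hBsome] at hs1 hs2
    obtain ⟨hv1, he1⟩ := hs1
    obtain ⟨hv2, he2⟩ := hs2
    obtain ⟨q1, u1, hq1, hu1, hq1m, hu1K, hc1⟩ :=
      decode m Z E KK hm hZ hKK (j₁:ℕ) ((k:ℕ)%KK) j₁.isLt he hv1
    obtain ⟨q2, u2, hq2, hu2, hq2m, hu2K, hc2⟩ :=
      decode m Z E KK hm hZ hKK (j₂:ℕ) ((k:ℕ)%KK) j₂.isLt he hv2
    rw [hq1, hu1, Nat.mod_eq_of_lt (enc_lt hq1m hu1K)] at he1
    rw [hq2, hu2, Nat.mod_eq_of_lt (enc_lt hq2m hu2K)] at he2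
    obtain ⟨hqe, hue⟩ := enc_inj hu1K hu2K (he1.trans he2.symm)
    subst hqe
    subst hue
    have hZq1 : Z ≤ (q1+1)*Z := by
      have h1 : 1*Z ≤ (q1+1)*Z := Nat.mul_le_mul (show 1 ≤ q1+1 by omega) (le_refl Z)
      omega
    have hZq2 : Z ≤ (m+1)*Z + q1*E := by omega
    rcases hc1 with ⟨hj1, hw1⟩ | ⟨hj1, hw1⟩ <;> rcases hc2 with ⟨hj2, hw2⟩ | ⟨hj2, hw2⟩
    · exact Fin.ext (by omega)
    · exact absurd hw2 (by omega)
    · exact absurd hw1 (by omega)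
    · exact Fin.ext (by omega)
  · -- C4
    intro s j hex
    obtain ⟨k₀, hk₀⟩ := hex
    have he0 : (k₀:ℕ) % KK < KK := Nat.mod_lt _ hKK0
    rw [hBsome] at hk₀
    obtain ⟨hv0, he0e⟩ := hk₀
    obtain ⟨q0, u0, hq0, hu0, hq0m, hu0K, hc0⟩ :=
      decode m Z E KK hm hZ hKK (j:ℕ) ((k₀:ℕ)%KK) j.isLt he0 hv0
    rw [hq0, hu0, Nat.mod_eq_of_lt (enc_lt hq0m hu0K)] at he0e
    set D := (q0+1)*Z with hD
    have hDmZ : D ≤ m*Z := by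
      rw [hD]; exact Nat.mul_le_mul (show q0+1 ≤ m by omega) (le_refl Z)
    have hDZ : Z ≤ D := by
      rw [hD]
      have h1 : 1*Z ≤ (q0+1)*Z := Nat.mul_le_mul (show 1 ≤ q0+1 by omega) (le_refl Z)
      omega
    have hDK : D < KK := by omega
    -- decoding any other cell with value s gives (q0,u0)
    have hcell : ∀ (j' : Fin KK) (k : Fin (g*KK)), Bfun m Z E g KK j' k = some s →
        (((j':ℕ) = u0 ∧
          (D ≤ ((k:ℕ)%KK + KK - u0) % KK ∧ ((k:ℕ)%KK + KK - u0) % KK < D + Z ∨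
           (m+1)*Z + q0*E ≤ ((k:ℕ)%KK + KK - u0) % KK ∧
             ((k:ℕ)%KK + KK - u0) % KK < (m+1)*Z + q0*E + E)) ∨
         ((u0 + D) % KK = (j':ℕ) ∧ ((k:ℕ)%KK + KK - u0) % KK < Z)) := by
      intro j' k hjk
      have hek : (k:ℕ) % KK < KK := Nat.mod_lt _ hKK0
      rw [hBsome] at hjk
      obtain ⟨hv1, he1⟩ := hjk
      obtain ⟨q1, u1, hq1, hu1, hq1m, hu1K, hc1⟩ :=
        decode m Z E KK hm hZ hKK (j':ℕ) ((k:ℕ)%KK) j'.isLt hek hv1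
      rw [hq1, hu1, Nat.mod_eq_of_lt (enc_lt hq1m hu1K)] at he1
      obtain ⟨hqe, hue⟩ := enc_inj hu1K hu0K (he1.trans he0e.symm)
      subst hqe
      subst hue
      rw [← hD] at hc1
      exact hc1
    have hrow : (j:ℕ) = u0 ∨ (u0 + D) % KK = (j:ℕ) := by
      rcases hc0 with ⟨h, _⟩ | ⟨h, _⟩
      · exact Or.inl h
      · exact Or.inr h
    rcases hrow with hrow | hrow
    · -- row u0
      apply le_trans (Finset.card_le_card ?_)
        (countBound KK g Z E u0 D ((m+1)*Z + q0*E) hKK0 hu0K)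
      intro k hk
      simp only [Finset.mem_filter, Finset.mem_univ, true_and] at hk ⊢
      obtain ⟨⟨j', hj'⟩, hns⟩ := hk
      rw [Ne, hBnone, hrow] at hns
      have hns' : Z ≤ ((k:ℕ)%KK + KK - u0) % KK := by omega
      rcases hcell j' k hj' with ⟨_, hw⟩ | ⟨_, hw⟩
      · exact hw
      · exact absurd hw (by omega)
    · -- row u0 + D
      apply le_trans (Finset.card_le_card ?_)
        (countBound KK g Z E u0 0 ((m+1)*Z + q0*E) hKK0 hu0K)
      intro k hk
      simp only [Finset.mem_filter, Finset.mem_univ, true_and] at hk ⊢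
      obtain ⟨⟨j', hj'⟩, hns⟩ := hk
      rw [Ne, hBnone, ← hrow] at hns
      have hek : (k:ℕ) % KK < KK := Nat.mod_lt _ hKK0
      have hns' : Z ≤ ((k:ℕ)%KK + KK - (u0 + D) % KK) % KK := by omega
      rcases hcell j' k hj' with ⟨_, hw⟩ | ⟨_, hw⟩
      · rcases hw with hw | hw
        · -- contradiction : the row u0+D cell in a Cross1 column is a star
          exfalso
          have hx := mod_two_cases KK (u0 + D) hKK0 (by omega)
          set x := (u0 + D) % KK with hxdef
          have hxK : x < KK := Nat.mod_lt _ hKK0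
          have h3 := mod_two_cases KK ((k:ℕ)%KK + KK - x) hKK0 (by omega)
          have h4 := mod_two_cases KK ((k:ℕ)%KK + KK - u0) hKK0 (by omega)
          omega
        · exact Or.inr hw
      · exact Or.inl ⟨by omega, by omega⟩

end Stmt14Aux

theorem stmt14 (K L M N t n γ : ℕ) (hn : 2 ≤ n) (hN : 0 < N) (hM : 0 < M)
    (ht0 : 0 < t) (ht : t * N = K * M) (hK : K = n * t + (n - 1) * L) (hLt : t ≤ L)
    (hγ : γ = Nat.gcd K (Nat.gcd t L)) :
    γ * (K / γ) = K ∧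
    (∃ B : Fin (K / γ) → Fin (γ * (K / γ)) → Option (Fin ((n - 1) * (K / γ))),
      IsEPDA L (t / γ) B) ∧
    (((n - 1) * (K / γ) : ℕ) : ℚ) / ((K / γ : ℕ) : ℚ) = ((K : ℚ) - t) / ((t : ℚ) + L) ∧
    ((K : ℚ) - t) / ((t : ℚ) + L) = (n : ℚ) - 1 := by
  have hγK : γ ∣ K := hγ ▸ Nat.gcd_dvd_left K (Nat.gcd t L)
  have hγtL : γ ∣ Nat.gcd t L := hγ ▸ Nat.gcd_dvd_right K (Nat.gcd t L)
  have hγt : γ ∣ t := hγtL.trans (Nat.gcd_dvd_left t L)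
  have hγL : γ ∣ L := hγtL.trans (Nat.gcd_dvd_right t L)
  have hγ0 : 0 < γ := by
    rw [hγ]
    exact Nat.gcd_pos_of_pos_right _ (Nat.gcd_pos_of_pos_left _ ht0)
  have hK0 : 0 < K := by
    have h1 : 0 < n*t := Nat.mul_pos (by omega) ht0
    omega
  have hmul : γ * (K/γ) = K := Nat.mul_div_cancel' hγK
  have htmul : γ * (t/γ) = t := Nat.mul_div_cancel' hγt
  have hLmul : γ * (L/γ) = L := Nat.mul_div_cancel' hγL
  have hZ0 : 0 < t/γ := Nat.div_pos (Nat.le_of_dvd ht0 hγt) hγ0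
  have hZL : t/γ ≤ L/γ := Nat.div_le_div_right hLt
  have hKK0 : 0 < K/γ := Nat.div_pos (Nat.le_of_dvd hK0 hγK) hγ0
  have hKKeq : K/γ = ((n-1)+1)*(t/γ) + (n-1)*(L/γ) := by
    have h1 : γ * (K/γ) = γ * (((n-1)+1)*(t/γ) + (n-1)*(L/γ)) := by
      rw [hmul, hK]
      have hn1 : (n-1)+1 = n := by omega
      rw [hn1]
      calc n*t + (n-1)*L = n*(γ*(t/γ)) + (n-1)*(γ*(L/γ)) := by rw [htmul, hLmul]
        _ = γ*(n*(t/γ) + (n-1)*(L/γ)) := by ring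
    exact Nat.eq_of_mul_eq_mul_left hγ0 h1
  have htL0 : (0:ℚ) < (t:ℚ) + L := by
    have h1 : (0:ℚ) < (t:ℚ) := by exact_mod_cast ht0
    have h2 : (0:ℚ) ≤ (L:ℚ) := by positivity
    linarith
  have hKQ : (K:ℚ) = (n:ℚ)*t + ((n:ℚ)-1)*L := by
    rw [hK]
    push_cast [Nat.cast_sub (show 1 ≤ n by omega)]
    ring
  have hlast : ((K:ℚ) - t)/((t:ℚ) + L) = (n:ℚ) - 1 := by
    rw [div_eq_iff (ne_of_gt htL0)]
    linear_combination hKQ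
  refine ⟨hmul, ?_, ?_, hlast⟩
  · have hbase := Stmt14Aux.baseEPDA (n-1) (t/γ) (L/γ) γ (K/γ) (by omega) hZ0 hZL hγ0 hKKeq
    rwa [hLmul] at hbase
  · rw [hlast]
    have hKKQ : ((K/γ : ℕ):ℚ) ≠ 0 := by exact_mod_cast hKK0.ne'
    push_cast [Nat.cast_sub (show 1 ≤ n by omega)]
    rw [mul_div_assoc, div_self hKKQ, mul_one]
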